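/- arXiv:2008.13429 — 2 statements merged into one kernel-verified Lean document; each statement's English description precedes it below -/
import Mathlib

section
/- Sort d ∈ ℝ^n in ascending order d_1 ≤ d_2 ≤ ... ≤ d_n and suppose (k/2) d_k - (1/2) Σ_{j=1}^k d_j < α ≤ (k/2) d_{k+1} - (1/2) Σ_{j=1}^k d_j for some 1 ≤ k < n. Then the minimizer z of Σ_j (d_j z_j + α z_j²) over the probability simplex, given by z_j = max((β - d_j)/(2α), 0) with β = (2α + Σ_{j=1}^k d_j)/k, has exactly k nonzero components (z_k > 0 and z_{k+1} = 0). -/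
/-- Let `d ∈ ℝ^n` be sorted ascending and suppose
`(k/2) d_k - (1/2) Σ_{j=1}^k d_j < α ≤ (k/2) d_{k+1} - (1/2) Σ_{j=1}^k d_j` for some
`1 ≤ k < n`. Then the minimizer `z_j = max((β - d_j)/(2α), 0)` with
`β = (2α + Σ_{j=1}^k d_j)/k` has exactly `k` nonzero components: `z_k > 0`, `z_{k+1} = 0`,
and `z_j > 0` exactly for the first `k` indices. -/
theorem sparsity_of_simplex_solution (n k : ℕ) (hk1 : 1 ≤ k) (hkn : k < n)
    (d : Fin n → ℝ) (hd : Monotone d) (α : ℝ) (hα : 0 < α)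
    (S : ℝ) (hS : S = ∑ j ∈ Finset.univ.filter (fun j : Fin n => (j : ℕ) < k), d j)
    (hlow : (k / 2 : ℝ) * d ⟨k - 1, by omega⟩ - S / 2 < α)
    (hhigh : α ≤ (k / 2 : ℝ) * d ⟨k, hkn⟩ - S / 2)
    (β : ℝ) (hβ : β = (2 * α + S) / k)
    (z : Fin n → ℝ) (hz : z = fun j => max ((β - d j) / (2 * α)) 0) :
    0 < z ⟨k - 1, by omega⟩ ∧ z ⟨k, hkn⟩ = 0 ∧ ∀ j : Fin n, (0 < z j ↔ (j : ℕ) < k) := by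
  have hkpos : (0:ℝ) < (k:ℝ) := by exact_mod_cast hk1
  subst hz hβ
  have hβlt : d ⟨k - 1, by omega⟩ < (2 * α + S) / k := by
    rw [lt_div_iff₀ hkpos]; nlinarith
  have hβle : (2 * α + S) / k ≤ d ⟨k, hkn⟩ := by
    rw [div_le_iff₀ hkpos]; nlinarith
  have key : ∀ j : Fin n, (0 < max (((2 * α + S) / k - d j) / (2 * α)) 0 ↔ (j : ℕ) < k) := by
    intro j
    simp only [lt_max_iff, lt_self_iff_false, or_false, div_pos_iff, sub_pos, sub_neg]
    constructor
    · rintro (⟨h1, _⟩ | ⟨_, h2⟩)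
      · by_contra hjk
        push_neg at hjk
        have : d ⟨k, hkn⟩ ≤ d j := hd (by rw [Fin.le_def]; exact hjk)
        linarith
      · linarith
    · intro hjk
      left
      have : d j ≤ d ⟨k - 1, by omega⟩ := hd (by rw [Fin.le_def]; exact Nat.le_pred_of_lt hjk)
      exact ⟨by linarith, by linarith⟩
  refine ⟨(key _).mpr (Nat.sub_lt (by omega) one_pos), ?_, key⟩
  simp only [max_eq_right_iff]
  apply div_nonpos_of_nonpos_of_nonneg <;> linarith
end

section
/- Let X ∈ ℝ^{n×m} with rows x_i^T, H = I - (1/n)11^T the centering matrix, and Z the block-constant clustering matrix (z_ij = 1/n_k if i,j in cluster k, else 0). Then Tr(X^T H (I - Z) H X) equals the within-cluster sum of squares (k-means objective) Σ_k Σ_{i ∈ C_k} ‖x_i - m_k‖², where m_k is the mean of cluster k, provided each cluster mean is computed in the original (uncentered) coordinates. -/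
open Matrix

/-- For `X ∈ ℝ^{n×m}` with rows `x_i`, `H = I - (1/n)11ᵀ` the centering matrix, and `Z`
the block-constant clustering matrix of a clustering `π` (`z_ij = 1/n_k` if `i, j` are both
in cluster `k`, else `0`), `Tr(Xᵀ H (I - Z) H X)` equals the within-cluster sum of squares
`Σ_k Σ_{i ∈ C_k} ‖x_i - m_k‖²`, with `m_k` the mean of cluster `k` in the original
coordinates. -/
theorem trace_centered_equals_kmeans (n m c : ℕ) (hn : 0 < n)
    (π : Fin n → Fin c) (hπ : Function.Surjective π)
    (nk : Fin c → ℕ) (hnk : ∀ k, nk k = (Finset.univ.filter fun i => π i = k).card)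
    (Z : Matrix (Fin n) (Fin n) ℝ)
    (hZ : Z = Matrix.of fun i j => if π i = π j then (1 : ℝ) / (nk (π i)) else 0)
    (H : Matrix (Fin n) (Fin n) ℝ)
    (hH : H = 1 - (1 / (n : ℝ)) • (Matrix.of fun _ _ => (1 : ℝ)))
    (X : Matrix (Fin n) (Fin m) ℝ)
    (μ : Fin c → Fin m → ℝ)
    (hμ : ∀ k, μ k = fun a => (1 / (nk k : ℝ)) * ∑ i ∈ Finset.univ.filter
        (fun i => π i = k), X i a) :
    (Xᵀ * H * (1 - Z) * H * X).trace
      = ∑ k, ∑ i ∈ Finset.univ.filter (fun i => π i = k), ∑ a, (X i a - μ k a)^2 := by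
  have hnkpos : ∀ k : Fin c, 0 < nk k := by
    intro k
    rw [hnk]
    obtain ⟨i, hi⟩ := hπ k
    exact Finset.card_pos.2 ⟨i, by simp [hi]⟩
  have hnkne : ∀ k : Fin c, (nk k : ℝ) ≠ 0 := fun k =>
    Nat.cast_ne_zero.2 (hnkpos k).ne'
  set J : Matrix (Fin n) (Fin n) ℝ := Matrix.of fun _ _ => (1 : ℝ) with hJ
  have hZrow : ∀ i, ∑ j, Z i j = 1 := by
    intro i
    rw [hZ]
    simp only [Matrix.of_apply]
    rw [← Finset.sum_filter]
    have hcard : (Finset.univ.filter fun j => π i = π j).card = nk (π i) := by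
      rw [hnk]; congr 1; ext j; simp [eq_comm]
    rw [Finset.sum_const, hcard, nsmul_eq_mul]
    rw [mul_one_div]; exact div_self (hnkne (π i))
  have hZcol : ∀ j, ∑ i, Z i j = 1 := by
    intro j
    have hsymm : ∀ i, Z i j = Z j i := by
      intro i; rw [hZ]; simp only [Matrix.of_apply]
      by_cases h : π i = π j
      · rw [if_pos h, if_pos h.symm, h]
      · rw [if_neg h, if_neg (fun hh => h hh.symm)]
    simp_rw [hsymm]; exact hZrow j
  have hJJ : J * J = (n : ℝ) • J := by
    ext i j; simp [hJ, Matrix.mul_apply]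
  have hZJ : Z * J = J := by
    ext i j; simp [hJ, Matrix.mul_apply, hZrow i]
  have hJZ : J * Z = J := by
    ext i j; simp [hJ, Matrix.mul_apply, hZcol j]
  have hnne : (n : ℝ) ≠ 0 := Nat.cast_ne_zero.2 hn.ne'
  have key : H * (1 - Z) * H = 1 - Z := by
    rw [hH]
    simp only [Matrix.sub_mul, Matrix.mul_sub, Matrix.one_mul, Matrix.mul_one,
      Matrix.smul_mul, Matrix.mul_smul, hJJ, hZJ, hJZ, smul_smul]
    have h2 : (1 / (n:ℝ)) * (n:ℝ) = 1 := by field_simp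
    rw [h2, one_smul]
    simp only [sub_self, smul_zero, sub_zero]
    abel
  have hassoc : Xᵀ * H * (1 - Z) * H * X = Xᵀ * (1 - Z) * X := by
    have h3 : Xᵀ * H * (1 - Z) * H * X = Xᵀ * (H * (1 - Z) * H) * X := by
      simp only [Matrix.mul_assoc]
    rw [h3, key]
  rw [hassoc]
  have hZX : ∀ i a, ∑ j, Z i j * X j a = μ (π i) a := by
    intro i a
    rw [hZ, hμ]
    simp only [Matrix.of_apply, ite_mul, zero_mul]
    rw [← Finset.sum_filter]
    have hf : (Finset.univ.filter fun j => π i = π j)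
        = (Finset.univ.filter fun j => π j = π i) := by
      congr 1; ext j; simp [eq_comm]
    rw [hf, Finset.mul_sum]
  have hsum : ∀ k a, ∑ i ∈ Finset.univ.filter (fun i => π i = k), X i a
      = (nk k : ℝ) * μ k a := by
    intro k a
    rw [hμ]
    dsimp only
    rw [← mul_assoc, mul_one_div, div_self (hnkne k), one_mul]
  have htrace : (Xᵀ * (1 - Z) * X).trace
      = ∑ i, ∑ a, X i a ^ 2 - ∑ i, ∑ a, X i a * μ (π i) a := by
    rw [Matrix.trace]
    simp only [Matrix.diag_apply, Matrix.mul_apply, Matrix.transpose_apply,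
      Matrix.sub_apply, Matrix.one_apply]
    rw [Finset.sum_comm, ← Finset.sum_sub_distrib]
    refine Finset.sum_congr rfl fun i _ => ?_
    rw [← Finset.sum_sub_distrib]
    refine Finset.sum_congr rfl fun a _ => ?_
    have hZsymm : ∀ p q, Z p q = Z q p := by
      intro p q; rw [hZ]; simp only [Matrix.of_apply]
      by_cases h : π p = π q
      · rw [if_pos h, if_pos h.symm, h]
      · rw [if_neg h, if_neg (fun hh => h hh.symm)]
    have h5 : ∑ x, X x a * ((if x = i then (1:ℝ) else 0) - Z x i)
        = X i a - μ (π i) a := by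
      simp_rw [mul_sub]
      rw [Finset.sum_sub_distrib]
      congr 1
      · simp [mul_ite]
      · simp_rw [fun x => hZsymm x i]
        rw [← hZX i a]
        exact Finset.sum_congr rfl fun x _ => mul_comm _ _
    rw [h5]
    ring
  rw [htrace]
  have e1 : ∑ i, ∑ a, X i a ^ 2
      = ∑ k, ∑ i ∈ Finset.univ.filter (fun i => π i = k), ∑ a, X i a ^ 2 :=
    (Finset.sum_fiberwise Finset.univ π _).symm
  have e2 : ∑ i, ∑ a, X i a * μ (π i) a
      = ∑ k, ∑ i ∈ Finset.univ.filter (fun i => π i = k), ∑ a, X i a * μ k a := by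
    rw [← Finset.sum_fiberwise Finset.univ π (fun i => ∑ a, X i a * μ (π i) a)]
    refine Finset.sum_congr rfl fun k _ => Finset.sum_congr rfl fun i hi => ?_
    rw [(Finset.mem_filter.1 hi).2]
  rw [e1, e2, ← Finset.sum_sub_distrib]
  refine Finset.sum_congr rfl fun k _ => ?_
  have hkey : ∑ i ∈ Finset.univ.filter (fun i => π i = k), ∑ a, X i a * μ k a
      = ∑ i ∈ Finset.univ.filter (fun i => π i = k), ∑ a, μ k a ^ 2 := by
    rw [Finset.sum_comm, Finset.sum_comm
      (s := Finset.univ.filter (fun i => π i = k))]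
    refine Finset.sum_congr rfl fun a _ => ?_
    rw [← Finset.sum_mul, hsum, Finset.sum_const, nsmul_eq_mul, ← hnk]
    ring
  have hexp : ∀ i a, (X i a - μ k a)^2
      = X i a ^ 2 - 2 * (X i a * μ k a) + μ k a ^ 2 := by intro i a; ring
  simp_rw [hexp]
  simp only [Finset.sum_add_distrib, Finset.sum_sub_distrib, ← Finset.mul_sum]
  rw [← hkey]
  ring
end
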